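/- In the chain setting, for R a treatment idempotent with R = R I_Q = Σ_Q R Q and RQR = λ_{QR}R, one has R V⁻¹ R = θ_R R where θ_R = Σ_Q α_Q λ_{QR}/(1 + rη_Q α_Q), with V⁻¹ as given by the explicit inverse formula. -/

import Mathlib

open Matrix BigOperators
open scoped Classical

/-- For a treatment idempotent `R` with `R = ∑_Q R Q` and `RQR = λ_{QR} R`,
one has `R V⁻¹ R = θ_R • R` with
`θ_R = ∑_Q α_Q λ_{QR}/(1 + rη_Qα_Q)`, where `V⁻¹` is the explicit inverse
`∑_P ξ_P⁻¹ • P − ∑_{P,Q,P*} (rη_Q/(1+rη_Qα_Q)) (ξ_Pξ_{P*})⁻¹ • P Q P*`. -/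
theorem stmt_16 {n : ℕ} {ιP ιQ : Type*} [Fintype ιP] [Fintype ιQ]
    (P : ιP → Matrix (Fin n) (Fin n) ℝ)
    (hPsym : ∀ i, (P i)ᵀ = P i)
    (hPidem : ∀ i, P i * P i = P i)
    (hPorth : ∀ i j, i ≠ j → P i * P j = 0)
    (hPsum : ∑ i, P i = 1)
    (Qm : ιQ → Matrix (Fin n) (Fin n) ℝ)
    (hQsym : ∀ j, (Qm j)ᵀ = Qm j)
    (hQidem : ∀ j, Qm j * Qm j = Qm j)
    (hQorth : ∀ j k, j ≠ k → Qm j * Qm k = 0)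
    (lam : ιP → ιQ → ℝ)
    (hbal : ∀ i j, Qm j * P i * Qm j = lam i j • Qm j)
    (hcross : ∀ i j k, j ≠ k → Qm j * P i * Qm k = 0)
    (ξ : ιP → ℝ) (hξ : ∀ i, 0 < ξ i)
    (η : ιQ → ℝ) (r : ℝ) (hr : 0 < r)
    (α : ιQ → ℝ) (hα : ∀ j, α j = ∑ i, lam i j / ξ i)
    (hden : ∀ j, 1 + r * η j * α j ≠ 0)
    (R : Matrix (Fin n) (Fin n) ℝ)
    (hRsym : Rᵀ = R) (hRidem : R * R = R)
    (lamQR : ιQ → ℝ)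
    (hRbal : ∀ j, R * Qm j * R = lamQR j • R)
    (hRsum : ∑ j, R * Qm j = R)
    (hRcross : ∀ i j k, j ≠ k → R * Qm j * P i * Qm k * R = 0)
    (hRmix : ∀ i j, R * Qm j * P i * Qm j * R = (lam i j * lamQR j) • R) :
    R * ((∑ i, (ξ i)⁻¹ • P i) -
          ∑ i, ∑ j, ∑ k,
            (r * η j / (1 + r * η j * α j)) •
              ((ξ i * ξ k)⁻¹ • (P i * Qm j * P k))) * R
      = (∑ j, α j * lamQR j / (1 + r * η j * α j)) • R := by
  have hRsum' : ∑ j, Qm j * R = R := by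
    have h := congrArg Matrix.transpose hRsum
    simpa [Matrix.transpose_sum, Matrix.transpose_mul, hQsym, hRsym] using h
  -- expand R on the right
  have expandR : ∀ M : Matrix (Fin n) (Fin n) ℝ, M * R = ∑ k, M * Qm k * R := by
    intro M
    calc M * R = M * ∑ k, Qm k * R := by rw [hRsum']
    _ = ∑ k, M * Qm k * R := by rw [Matrix.mul_sum]; simp [mul_assoc]
  have expandL : ∀ M : Matrix (Fin n) (Fin n) ℝ, R * M = ∑ j, R * Qm j * M := by
    intro M
    calc R * M = (∑ j, R * Qm j) * M := by rw [hRsum]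
    _ = ∑ j, R * Qm j * M := by rw [Matrix.sum_mul]
  have key1 : ∀ i j, R * Qm j * P i * R = (lam i j * lamQR j) • R := by
    intro i j
    rw [expandR (R * Qm j * P i), Finset.sum_eq_single j]
    · exact hRmix i j
    · intro k _ hk
      exact hRcross i j k (Ne.symm hk)
    · simp
  have key2 : ∀ i, R * P i * R = (∑ j, lam i j * lamQR j) • R := by
    intro i
    rw [mul_assoc, expandL (P i * R)]
    have h : ∀ j, R * Qm j * (P i * R) = (lam i j * lamQR j) • R := by
      intro j; rw [← mul_assoc]; exact key1 i j
    simp_rw [h]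
    rw [← Finset.sum_smul]
  have key3 : ∀ i j k, R * (P i * Qm j * P k) * R
      = (lam i j * (lam k j * lamQR j)) • R := by
    intro i j k
    rw [mul_assoc, expandL (P i * Qm j * P k * R), Finset.sum_eq_single j]
    · have h1 : R * Qm j * (P i * Qm j * P k * R)
          = R * (Qm j * P i * Qm j) * (P k * R) := by
        simp only [mul_assoc]
      rw [h1, hbal, Matrix.mul_smul, Matrix.smul_mul, ← mul_assoc, key1 k j,
        smul_smul]
    · intro j' _ hj'
      have h1 : R * Qm j' * (P i * Qm j * P k * R)
          = R * (Qm j' * P i * Qm j) * (P k * R) := by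
        simp only [mul_assoc]
      rw [h1, hcross i j' j hj']
      simp
    · simp
  -- assemble: distribute R over the difference and the sums
  simp only [Matrix.mul_sub, Matrix.sub_mul, Matrix.mul_sum, Matrix.sum_mul,
    Matrix.mul_smul, Matrix.smul_mul]
  simp_rw [key2, key3, smul_smul, ← Finset.sum_smul, ← sub_smul]
  congr 1
  -- scalar identity
  have hswap1 : ∑ i, (ξ i)⁻¹ * ∑ j, lam i j * lamQR j
      = ∑ j, α j * lamQR j := by
    simp_rw [Finset.mul_sum]
    rw [Finset.sum_comm]
    refine Finset.sum_congr rfl fun j _ => ?_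
    rw [hα, Finset.sum_mul]
    refine Finset.sum_congr rfl fun i _ => ?_
    rw [div_eq_mul_inv]; ring
  have hswap2 : ∑ i, ∑ j, ∑ k,
        r * η j / (1 + r * η j * α j) *
          ((ξ i * ξ k)⁻¹ * (lam i j * (lam k j * lamQR j)))
      = ∑ j, r * η j / (1 + r * η j * α j) * (lamQR j * (α j * α j)) := by
    rw [Finset.sum_comm]
    refine Finset.sum_congr rfl fun j _ => ?_
    have hT : ∀ i k : ιP, r * η j / (1 + r * η j * α j) *
          ((ξ i * ξ k)⁻¹ * (lam i j * (lam k j * lamQR j)))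
        = r * η j / (1 + r * η j * α j) * lamQR j *
            ((lam i j / ξ i) * (lam k j / ξ k)) := by
      intro i k
      rw [mul_inv, div_eq_mul_inv (lam i j), div_eq_mul_inv (lam k j)]
      ring
    simp_rw [hT, ← Finset.mul_sum, ← Finset.sum_mul, ← hα]
    ring
  rw [hswap1, hswap2, ← Finset.sum_sub_distrib]
  refine Finset.sum_congr rfl fun j _ => ?_
  have hd : 1 + r * η j * α j ≠ 0 := hden j
  field_simp
  have hd' : 1 + α j * r * η j ≠ 0 := by convert hd using 2; ring
  rw [one_sub_div hd']
  ring
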